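/- Let Λ ⊂ ℂ^k be a lattice, c ∈ ℂ^k, and let X₁ be sampled from the discrete Gaussian D_{Λ+c,√Σ₁} and X₂ independently from the continuous complex Gaussian density f_{√Σ₂}. Set Σ₀ = Σ₁+Σ₂ and define Σ by Σ⁻¹ = Σ₁⁻¹+Σ₂⁻¹. If the flatness factor satisfies ε_Λ(√Σ) ≤ ε ≤ 1/2, then the L¹ distance between the density g of X = X₁+X₂ and the Gaussian density f_{√Σ₀} satisfies 𝕍(g, f_{√Σ₀}) ≤ 4ε. -/

import Mathlib

open Matrix MeasureTheory
open scoped Real ComplexOrder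

/-- The circularly symmetric complex Gaussian density
`f_{√Σ}(z) = (π^k det Σ)⁻¹ e^{-z†Σ⁻¹z}` on `ℂ^k`. -/
noncomputable def complexGaussian {k : ℕ} (S : Matrix (Fin k) (Fin k) ℂ)
    (z : Fin k → ℂ) : ℝ :=
  (π ^ k * S.det.re)⁻¹ * Real.exp (-(star z ⬝ᵥ S⁻¹.mulVec z).re)

namespace CGAux

open scoped NNReal ENNReal

variable {k : ℕ}

lemma det_re_pos {A : Matrix (Fin k) (Fin k) ℂ} (hA : A.PosDef) : 0 < A.det.re := by
  have h := hA.det_pos; rw [Complex.lt_def] at h; simpa using h.1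

lemma det_im_zero {A : Matrix (Fin k) (Fin k) ℂ} (hA : A.PosDef) : A.det.im = 0 := by
  have h := hA.det_pos; rw [Complex.lt_def] at h; simpa using h.2.symm

lemma det_isUnit {A : Matrix (Fin k) (Fin k) ℂ} (hA : A.PosDef) : IsUnit A.det :=
  hA.det_pos.ne'.isUnit

lemma cg_pos {A : Matrix (Fin k) (Fin k) ℂ} (hA : A.PosDef) (z : Fin k → ℂ) :
    0 < complexGaussian A z := by
  unfold complexGaussian
  have := det_re_pos hA
  positivity

lemma quad_re_nonneg {A : Matrix (Fin k) (Fin k) ℂ} (hA : A.PosDef) (z : Fin k → ℂ) :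
    0 ≤ (star z ⬝ᵥ A⁻¹.mulVec z).re :=
  hA.inv.posSemidef.re_dotProduct_nonneg z

lemma cg_le {A : Matrix (Fin k) (Fin k) ℂ} (hA : A.PosDef) (z : Fin k → ℂ) :
    complexGaussian A z ≤ (π ^ k * A.det.re)⁻¹ := by
  unfold complexGaussian
  have h1 : Real.exp (-(star z ⬝ᵥ A⁻¹.mulVec z).re) ≤ 1 := by
    rw [Real.exp_le_one_iff]
    simpa using quad_re_nonneg hA z
  have h2 : (0:ℝ) < (π ^ k * A.det.re)⁻¹ := by
    have := det_re_pos hA; positivity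
  nlinarith

lemma cg_neg (A : Matrix (Fin k) (Fin k) ℂ) (z : Fin k → ℂ) :
    complexGaussian A (-z) = complexGaussian A z := by
  unfold complexGaussian
  rw [star_neg, mulVec_neg, neg_dotProduct, dotProduct_neg, neg_neg]

lemma quad_continuous (A : Matrix (Fin k) (Fin k) ℂ) :
    Continuous (fun z : Fin k → ℂ => star z ⬝ᵥ A.mulVec z) := by
  simp only [dotProduct, Matrix.mulVec, Pi.star_apply]
  fun_prop

lemma cg_continuous (A : Matrix (Fin k) (Fin k) ℂ) : Continuous (complexGaussian A) := by
  unfold complexGaussian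
  exact continuous_const.mul
    (Real.continuous_exp.comp (Complex.continuous_re.comp (quad_continuous A⁻¹)).neg)

section Prod
variable {A B C : Matrix (Fin k) (Fin k) ℂ}

lemma star_mulVec_dot (M : Matrix (Fin k) (Fin k) ℂ) (u v : Fin k → ℂ) :
    star (M.mulVec u) ⬝ᵥ v = star u ⬝ᵥ (Mᴴ.mulVec v) := by
  rw [star_mulVec, ← dotProduct_mulVec]

lemma sum_inv_eq (hA : IsUnit A.det) (hB : IsUnit B.det) :
    A⁻¹ + B⁻¹ = A⁻¹ * (A + B) * B⁻¹ := by
  rw [Matrix.mul_add, Matrix.nonsing_inv_mul _ hA, Matrix.add_mul, Matrix.one_mul,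
    mul_assoc, Matrix.mul_nonsing_inv _ hB, Matrix.mul_one, add_comm]

variable (hA : A.PosDef) (hB : B.PosDef) (hC : C.PosDef)
  (hSinv : C⁻¹ = A⁻¹ + B⁻¹)

include hA hB hC hSinv

lemma C_eq : C = B * (A + B)⁻¹ * A := by
  have h1 : C⁻¹ = A⁻¹ * (A + B) * B⁻¹ := by
    rw [hSinv, sum_inv_eq (det_isUnit hA) (det_isUnit hB)]
  have h2 : C = (C⁻¹)⁻¹ := (Matrix.nonsing_inv_nonsing_inv _ (det_isUnit hC)).symm
  rw [h2, h1, Matrix.mul_inv_rev, Matrix.mul_inv_rev,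
    Matrix.nonsing_inv_nonsing_inv _ (det_isUnit hA),
    Matrix.nonsing_inv_nonsing_inv _ (det_isUnit hB), mul_assoc]

lemma key_mat : B⁻¹ * C * B⁻¹ = B⁻¹ - (A + B)⁻¹ := by
  have hS0 : (A + B).PosDef := hA.add hB
  have h1 : B⁻¹ * C * B⁻¹ = (A + B)⁻¹ * A * B⁻¹ := by
    rw [C_eq hA hB hC hSinv, ← mul_assoc, ← mul_assoc,
      Matrix.nonsing_inv_mul _ (det_isUnit hB), Matrix.one_mul]
  have h2 : (A + B)⁻¹ * A * B⁻¹ = (A + B)⁻¹ * ((A + B) - B) * B⁻¹ := by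
    rw [add_sub_cancel_right]
  rw [h1, h2, Matrix.mul_sub, Matrix.nonsing_inv_mul _ (det_isUnit hS0),
    Matrix.sub_mul, Matrix.one_mul, mul_assoc,
    Matrix.mul_nonsing_inv _ (det_isUnit hB), Matrix.mul_one]

lemma det_re_id : (A + B).det.re * C.det.re = A.det.re * B.det.re := by
  have hS0 : (A + B).PosDef := hA.add hB
  have h1 : C⁻¹ = A⁻¹ * (A + B) * B⁻¹ := by
    rw [hSinv, sum_inv_eq (det_isUnit hA) (det_isUnit hB)]
  have h2 : (C.det)⁻¹ = (A.det)⁻¹ * (A + B).det * (B.det)⁻¹ := by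
    have := congrArg Matrix.det h1
    simp only [Matrix.det_mul, Matrix.det_nonsing_inv, Ring.inverse_eq_inv] at this
    exact this
  have hA0 : A.det ≠ 0 := hA.det_pos.ne'
  have hB0 : B.det ≠ 0 := hB.det_pos.ne'
  have hC0 : C.det ≠ 0 := hC.det_pos.ne'
  have hdet : (A + B).det * C.det = A.det * B.det := by
    have h3 := congrArg (fun z : ℂ => A.det * B.det * C.det * z) h2
    field_simp at h3
    have h5 : A.det * B.det * (A.det * B.det) =
        A.det * B.det * ((A + B).det * C.det) := by linear_combination (A.det * B.det) * h3
    exact (mul_left_cancel₀ (mul_ne_zero hA0 hB0) h5).symm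
  have h4 := congrArg Complex.re hdet
  rw [Complex.mul_re, Complex.mul_re, det_im_zero hA, det_im_zero hB, det_im_zero hS0,
    det_im_zero hC] at h4
  simpa using h4

lemma quad_id (x y : Fin k → ℂ) :
    star y ⬝ᵥ A⁻¹.mulVec y + star (x - y) ⬝ᵥ B⁻¹.mulVec (x - y) =
    star x ⬝ᵥ (A + B)⁻¹.mulVec x +
      star (y - C.mulVec (B⁻¹.mulVec x)) ⬝ᵥ C⁻¹.mulVec (y - C.mulVec (B⁻¹.mulVec x)) := by
  have hS0 : (A + B).PosDef := hA.add hB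
  set mx := C.mulVec (B⁻¹.mulVec x) with hmx
  have e1 : C⁻¹.mulVec mx = B⁻¹.mulVec x := by
    rw [hmx, mulVec_mulVec, Matrix.nonsing_inv_mul _ (det_isUnit hC), Matrix.one_mulVec]
  have t2 : star y ⬝ᵥ C⁻¹.mulVec mx = star y ⬝ᵥ B⁻¹.mulVec x := by rw [e1]
  have t1 : star mx ⬝ᵥ C⁻¹.mulVec y = star x ⬝ᵥ B⁻¹.mulVec y := by
    rw [hmx, star_mulVec_dot, hC.1.eq, mulVec_mulVec, Matrix.mul_nonsing_inv _ (det_isUnit hC),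
      Matrix.one_mulVec, star_mulVec_dot, hB.inv.1.eq]
  have t3 : star mx ⬝ᵥ C⁻¹.mulVec mx =
      star x ⬝ᵥ B⁻¹.mulVec x - star x ⬝ᵥ (A + B)⁻¹.mulVec x := by
    rw [e1, hmx, star_mulVec_dot, hC.1.eq, star_mulVec_dot, hB.inv.1.eq,
      mulVec_mulVec, mulVec_mulVec, key_mat hA hB hC hSinv,
      Matrix.sub_mulVec, dotProduct_sub]
  have hq : star y ⬝ᵥ C⁻¹.mulVec y =
      star y ⬝ᵥ A⁻¹.mulVec y + star y ⬝ᵥ B⁻¹.mulVec y := by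
    rw [hSinv, Matrix.add_mulVec, dotProduct_add]
  have E1 : star (x - y) ⬝ᵥ B⁻¹.mulVec (x - y) =
      star x ⬝ᵥ B⁻¹.mulVec x - star x ⬝ᵥ B⁻¹.mulVec y - star y ⬝ᵥ B⁻¹.mulVec x +
        star y ⬝ᵥ B⁻¹.mulVec y := by
    simp only [star_sub, sub_dotProduct, mulVec_sub, dotProduct_sub]
    ring
  have E2 : star (y - mx) ⬝ᵥ C⁻¹.mulVec (y - mx) =
      star y ⬝ᵥ C⁻¹.mulVec y - star y ⬝ᵥ C⁻¹.mulVec mx - star mx ⬝ᵥ C⁻¹.mulVec y +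
        star mx ⬝ᵥ C⁻¹.mulVec mx := by
    simp only [star_sub, sub_dotProduct, mulVec_sub, dotProduct_sub]
    ring
  rw [E1, E2, hq, t1, t2, t3]
  ring

lemma cg_prod (x y : Fin k → ℂ) :
    complexGaussian A y * complexGaussian B (x - y) =
    complexGaussian (A + B) x * complexGaussian C (y - C.mulVec (B⁻¹.mulVec x)) := by
  have hS0 : (A + B).PosDef := hA.add hB
  unfold complexGaussian
  rw [mul_mul_mul_comm, mul_mul_mul_comm ((π ^ k * (A + B).det.re)⁻¹), ← Real.exp_add,
    ← Real.exp_add, ← neg_add, ← neg_add, ← Complex.add_re, ← Complex.add_re,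
    quad_id hA hB hC hSinv x y]
  congr 1
  rw [← mul_inv, ← mul_inv]
  congr 1
  have hd := det_re_id hA hB hC hSinv
  linear_combination (-(π ^ k * π ^ k)) * hd

end Prod

section Integral

lemma exp_normSq_eq (d : ℝ) (z : ℂ) :
    Real.exp (-(d * Complex.normSq z)) =
      (fun p : ℝ × ℝ => Real.exp (-d * p.1 ^ 2) * Real.exp (-d * p.2 ^ 2))
        (Complex.measurableEquivRealProd z) := by
  simp only [Complex.measurableEquivRealProd_apply, ← Real.exp_add, Complex.normSq_apply]
  congr 1
  ring

lemma integral_1d {d : ℝ} (hd : 0 < d) :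
    ∫ z : ℂ, Real.exp (-(d * Complex.normSq z)) = π / d := by
  have hemb := Complex.measurableEquivRealProd.measurableEmbedding
  have hMP := Complex.volume_preserving_equiv_real_prod
  have h0 := MeasurePreserving.integral_comp hMP hemb
      (fun p : ℝ × ℝ => Real.exp (-d * p.1 ^ 2) * Real.exp (-d * p.2 ^ 2))
  calc ∫ z : ℂ, Real.exp (-(d * Complex.normSq z))
      = ∫ z : ℂ, (fun p : ℝ × ℝ => Real.exp (-d * p.1 ^ 2) * Real.exp (-d * p.2 ^ 2))
          (Complex.measurableEquivRealProd z) :=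
        integral_congr_ae (ae_of_all _ fun z => exp_normSq_eq d z)
    _ = ∫ p : ℝ × ℝ, Real.exp (-d * p.1 ^ 2) * Real.exp (-d * p.2 ^ 2) := h0
    _ = π / d := by
        rw [MeasureTheory.Measure.volume_eq_prod, integral_prod_mul
          (f := fun t : ℝ => Real.exp (-d * t ^ 2)) (g := fun t : ℝ => Real.exp (-d * t ^ 2)),
          integral_gaussian, Real.mul_self_sqrt (by positivity)]

lemma integrable_1d {d : ℝ} (hd : 0 < d) :
    Integrable (fun z : ℂ => Real.exp (-(d * Complex.normSq z))) := by
  have hemb := Complex.measurableEquivRealProd.measurableEmbedding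
  have hMP := Complex.volume_preserving_equiv_real_prod
  have h2 : Integrable (fun p : ℝ × ℝ => Real.exp (-d * p.1 ^ 2) * Real.exp (-d * p.2 ^ 2)) := by
    rw [MeasureTheory.Measure.volume_eq_prod]
    exact (integrable_exp_neg_mul_sq hd).mul_prod (integrable_exp_neg_mul_sq hd)
  have h3 := (MeasurePreserving.integrable_comp_emb hMP hemb).2 h2
  exact h3.congr (ae_of_all _ fun z => (exp_normSq_eq d z).symm)

lemma unitary_norm_eq {V : Matrix (Fin k) (Fin k) ℂ}
    (hV : V ∈ Matrix.unitaryGroup (Fin k) ℂ) (x : Fin k → ℂ) :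
    ∑ i, Complex.normSq (V.mulVec x i) = ∑ i, Complex.normSq (x i) := by
  have h1 : star (V.mulVec x) ⬝ᵥ V.mulVec x = star x ⬝ᵥ x := by
    rw [star_mulVec, ← dotProduct_mulVec, mulVec_mulVec, ← Matrix.star_eq_conjTranspose,
      (Matrix.mem_unitaryGroup_iff'.mp hV), Matrix.one_mulVec]
  have h2 : ∀ y : Fin k → ℂ, (star y ⬝ᵥ y).re = ∑ i, Complex.normSq (y i) := by
    intro y
    simp only [dotProduct, Pi.star_apply, Complex.re_sum]
    refine Finset.sum_congr rfl fun i _ => ?_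
    rw [RCLike.star_def, mul_comm, Complex.mul_conj, Complex.ofReal_re]
  rw [← h2, ← h2, h1]

lemma unitary_measurePreserving {V : Matrix (Fin k) (Fin k) ℂ}
    (hV : V ∈ Matrix.unitaryGroup (Fin k) ℂ) :
    MeasurePreserving (fun x : Fin k → ℂ => V.mulVec x) volume volume := by
  have hinv : Invertible V :=
    ⟨star V, Matrix.mem_unitaryGroup_iff'.mp hV, Matrix.mem_unitaryGroup_iff.mp hV⟩
  let e : (Fin k → ℂ) ≃ₗ[ℂ] (Fin k → ℂ) := V.toLinearEquiv' hinv
  let T : (Fin k → ℂ) ≃L[ℂ] (Fin k → ℂ) := e.toContinuousLinearEquiv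
  have hTe : (fun x : Fin k → ℂ => V.mulVec x) = ⇑T := rfl
  set B : Set (Fin k → ℂ) := {x | (∑ i, Complex.normSq (x i)) ≤ 1} with hB
  have hBclosed : IsClosed B := by
    apply isClosed_le _ continuous_const
    exact continuous_finset_sum _ fun i _ => Complex.continuous_normSq.comp (continuous_apply i)
  have hBmeas : MeasurableSet B := hBclosed.measurableSet
  have hpre : ⇑T ⁻¹' B = B := by
    ext x
    have : T x = V.mulVec x := rfl
    simp only [Set.mem_preimage, hB, Set.mem_setOf_eq, this, unitary_norm_eq hV]
  have hpos : volume B ≠ 0 := by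
    refine (lt_of_lt_of_le (Metric.measure_ball_pos volume (0 : Fin k → ℂ)
      (r := 1 / (k + 1)) (by positivity)) (measure_mono ?_)).ne'
    intro x hx
    simp only [Metric.mem_ball, dist_zero_right] at hx
    simp only [hB, Set.mem_setOf_eq]
    have hxi : ∀ i, Complex.normSq (x i) ≤ (1 / (k + 1)) ^ 2 := by
      intro i
      rw [Complex.normSq_eq_norm_sq]
      have h4 : ‖x i‖ ≤ ‖x‖ := norm_le_pi_norm x i
      have hnn : (0:ℝ) ≤ ‖x i‖ := norm_nonneg _
      nlinarith [hx]
    have hk : (0:ℝ) ≤ k := Nat.cast_nonneg k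
    calc ∑ i, Complex.normSq (x i) ≤ ∑ _i : Fin k, (1 / (k + 1):ℝ) ^ 2 :=
          Finset.sum_le_sum fun i _ => hxi i
      _ = k * (1 / (k + 1):ℝ) ^ 2 := by simp [Finset.sum_const, mul_comm]
      _ ≤ 1 := by
          rw [div_pow, one_pow, mul_one_div, div_le_one (by positivity)]
          nlinarith
  have hfin : volume B ≠ ⊤ := by
    refine ne_of_lt (lt_of_le_of_lt (measure_mono ?_)
      (measure_closedBall_lt_top (x := (0 : Fin k → ℂ)) (r := 1)))
    intro x hx
    simp only [hB, Set.mem_setOf_eq] at hx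
    rw [Metric.mem_closedBall, dist_zero_right]
    refine (pi_norm_le_iff_of_nonneg zero_le_one).2 fun i => ?_
    have h5 : Complex.normSq (x i) ≤ 1 :=
      le_trans (Finset.single_le_sum (f := fun j => Complex.normSq (x j))
        (fun j _ => Complex.normSq_nonneg _) (Finset.mem_univ i)) hx
    rw [Complex.normSq_eq_norm_sq] at h5
    nlinarith [norm_nonneg (x i)]
  have hHaar : (Measure.map ⇑T volume).IsAddHaarMeasure := T.isAddHaarMeasure_map volume
  obtain ⟨c, hc⟩ : ∃ c : ℝ≥0, Measure.map ⇑T volume = c • volume :=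
    ⟨_, Measure.isAddLeftInvariant_eq_smul _ _⟩
  have hMB : Measure.map ⇑T volume B = volume B := by
    rw [Measure.map_apply T.continuous.measurable hBmeas, hpre]
  rw [hc] at hMB
  simp only [Measure.smul_apply, ENNReal.smul_def, smul_eq_mul] at hMB
  have hc1 : (c : ℝ≥0∞) = 1 :=
    (ENNReal.mul_left_inj hpos hfin).1 (by rw [hMB, one_mul])
  have hc2 : c = 1 := by exact_mod_cast hc1
  rw [hTe]
  exact ⟨T.continuous.measurable, by rw [hc, hc2, one_smul]⟩

lemma quad_eigen {P : Matrix (Fin k) (Fin k) ℂ} (hP : P.IsHermitian) (x : Fin k → ℂ) :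
    star x ⬝ᵥ P.mulVec x =
      star ((star (hP.eigenvectorUnitary : Matrix (Fin k) (Fin k) ℂ)).mulVec x) ⬝ᵥ
        (diagonal (RCLike.ofReal ∘ hP.eigenvalues)).mulVec
          ((star (hP.eigenvectorUnitary : Matrix (Fin k) (Fin k) ℂ)).mulVec x) := by
  set U : Matrix (Fin k) (Fin k) ℂ := (hP.eigenvectorUnitary : Matrix (Fin k) (Fin k) ℂ)
  set D : Matrix (Fin k) (Fin k) ℂ := diagonal (RCLike.ofReal ∘ hP.eigenvalues)
  have h1 : star ((star U).mulVec x) ⬝ᵥ D.mulVec ((star U).mulVec x) =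
      star x ⬝ᵥ ((U * D * star U).mulVec x) := by
    rw [star_mulVec, ← dotProduct_mulVec, mulVec_mulVec, mulVec_mulVec,
      Matrix.star_eq_conjTranspose, conjTranspose_conjTranspose]
  rw [h1]
  conv_lhs => rw [hP.spectral_theorem, Unitary.conjStarAlgAut_apply]

lemma diag_quad_re (d : Fin k → ℝ) (y : Fin k → ℂ) :
    (star y ⬝ᵥ (diagonal (RCLike.ofReal ∘ d : Fin k → ℂ)).mulVec y).re =
      ∑ i, d i * Complex.normSq (y i) := by
  simp only [dotProduct, Pi.star_apply, Matrix.mulVec_diagonal, Complex.re_sum,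
    Function.comp_apply]
  refine Finset.sum_congr rfl fun i _ => ?_
  have h1 : star (y i) * ((RCLike.ofReal (d i) : ℂ) * y i)
      = (RCLike.ofReal (d i) : ℂ) * (y i * (starRingEnd ℂ) (y i)) := by
    rw [RCLike.star_def]; ring
  rw [h1, Complex.mul_conj]
  have h2 : (RCLike.ofReal (d i) : ℂ) = Complex.ofReal (d i) := rfl
  rw [h2, ← Complex.ofReal_mul, Complex.ofReal_re]

lemma unitary_integral_comp {V : Matrix (Fin k) (Fin k) ℂ}
    (hV : V ∈ Matrix.unitaryGroup (Fin k) ℂ) (f : (Fin k → ℂ) → ℝ) :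
    ∫ x : Fin k → ℂ, f (V.mulVec x) = ∫ y : Fin k → ℂ, f y := by
  have hinv : Invertible V :=
    ⟨star V, Matrix.mem_unitaryGroup_iff'.mp hV, Matrix.mem_unitaryGroup_iff.mp hV⟩
  let e : (Fin k → ℂ) ≃ₗ[ℂ] (Fin k → ℂ) := V.toLinearEquiv' hinv
  let T : (Fin k → ℂ) ≃L[ℂ] (Fin k → ℂ) := e.toContinuousLinearEquiv
  have hemb : MeasurableEmbedding (fun x : Fin k → ℂ => V.mulVec x) :=
    T.toHomeomorph.measurableEmbedding
  exact MeasurePreserving.integral_comp (unitary_measurePreserving hV) hemb f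

lemma unitary_integrable_comp {V : Matrix (Fin k) (Fin k) ℂ}
    (hV : V ∈ Matrix.unitaryGroup (Fin k) ℂ) (f : (Fin k → ℂ) → ℝ) :
    Integrable (fun x : Fin k → ℂ => f (V.mulVec x)) ↔ Integrable f := by
  have hinv : Invertible V :=
    ⟨star V, Matrix.mem_unitaryGroup_iff'.mp hV, Matrix.mem_unitaryGroup_iff.mp hV⟩
  let e : (Fin k → ℂ) ≃ₗ[ℂ] (Fin k → ℂ) := V.toLinearEquiv' hinv
  let T : (Fin k → ℂ) ≃L[ℂ] (Fin k → ℂ) := e.toContinuousLinearEquiv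
  have hemb : MeasurableEmbedding (fun x : Fin k → ℂ => V.mulVec x) :=
    T.toHomeomorph.measurableEmbedding
  exact MeasurePreserving.integrable_comp_emb (unitary_measurePreserving hV) hemb

lemma cg_pointwise {A : Matrix (Fin k) (Fin k) ℂ} (hA : A.PosDef) (x : Fin k → ℂ) :
    complexGaussian A x = (π ^ k * A.det.re)⁻¹ *
      (fun y : Fin k → ℂ => ∏ i, Real.exp (-(hA.inv.1.eigenvalues i * Complex.normSq (y i))))
        ((star (hA.inv.1.eigenvectorUnitary : Matrix (Fin k) (Fin k) ℂ)).mulVec x) := by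
  unfold complexGaussian
  congr 1
  rw [quad_eigen hA.inv.1 x, diag_quad_re]
  rw [← Finset.sum_neg_distrib, Real.exp_sum]

lemma cg_integral {A : Matrix (Fin k) (Fin k) ℂ} (hA : A.PosDef) :
    ∫ x : Fin k → ℂ, complexGaussian A x = 1 := by
  have hP : (A⁻¹).PosDef := hA.inv
  have hH := hP.1
  set d : Fin k → ℝ := hH.eigenvalues with hd'
  have hd : ∀ i, 0 < d i := fun i => hP.eigenvalues_pos i
  set U : Matrix (Fin k) (Fin k) ℂ := (hH.eigenvectorUnitary : Matrix (Fin k) (Fin k) ℂ) with hU'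
  have hVmem : star U ∈ Matrix.unitaryGroup (Fin k) ℂ :=
    Unitary.star_mem hH.eigenvectorUnitary.2
  have hprod : ∏ i, d i = (A.det.re)⁻¹ := by
    have h1 : (A⁻¹).det = ∏ i, ((d i : ℝ) : ℂ) := hH.det_eq_prod_eigenvalues
    have h2 : (A⁻¹).det = (A.det)⁻¹ := by
      rw [Matrix.det_nonsing_inv, Ring.inverse_eq_inv]
    have h4 : A.det = ((A.det.re : ℝ) : ℂ) := by
      apply Complex.ext
      · simp
      · simp [det_im_zero hA]
    have h5 : ((∏ i, d i : ℝ) : ℂ) = (((A.det.re)⁻¹ : ℝ) : ℂ) := by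
      push_cast
      rw [← h1, h2, ← h4]
    exact_mod_cast h5
  calc ∫ x : Fin k → ℂ, complexGaussian A x
      = ∫ x : Fin k → ℂ, (π ^ k * A.det.re)⁻¹ *
          (fun y : Fin k → ℂ => ∏ i, Real.exp (-(d i * Complex.normSq (y i))))
            ((star U).mulVec x) := integral_congr_ae (ae_of_all _ fun x => cg_pointwise hA x)
    _ = (π ^ k * A.det.re)⁻¹ * ∫ x : Fin k → ℂ,
          (fun y : Fin k → ℂ => ∏ i, Real.exp (-(d i * Complex.normSq (y i))))
            ((star U).mulVec x) := integral_const_mul _ _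
    _ = (π ^ k * A.det.re)⁻¹ * ∫ y : Fin k → ℂ, ∏ i, Real.exp (-(d i * Complex.normSq (y i))) := by
          congr 1
          exact unitary_integral_comp hVmem
            (fun y : Fin k → ℂ => ∏ i, Real.exp (-(d i * Complex.normSq (y i))))
    _ = (π ^ k * A.det.re)⁻¹ * ∏ i, (π / d i) := by
          have hpi := integral_fintype_prod_eq_prod (ι := Fin k)
            (f := fun i (z : ℂ) => Real.exp (-(d i * Complex.normSq z))) (μ := fun _ => volume)
          rw [← volume_pi] at hpi
          rw [hpi]
          congr 1
          exact Finset.prod_congr rfl fun i _ => integral_1d (hd i)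
    _ = 1 := by
          rw [Finset.prod_div_distrib, Finset.prod_const, Finset.card_univ, Fintype.card_fin, hprod]
          have h6 := det_re_pos hA
          have h7 : (0:ℝ) < π := Real.pi_pos
          field_simp

lemma cg_integrable {A : Matrix (Fin k) (Fin k) ℂ} (hA : A.PosDef) :
    Integrable (complexGaussian A) := by
  have hP : (A⁻¹).PosDef := hA.inv
  have hH := hP.1
  set d : Fin k → ℝ := hH.eigenvalues with hd'
  have hd : ∀ i, 0 < d i := fun i => hP.eigenvalues_pos i
  set U : Matrix (Fin k) (Fin k) ℂ := (hH.eigenvectorUnitary : Matrix (Fin k) (Fin k) ℂ) with hU'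
  have hVmem : star U ∈ Matrix.unitaryGroup (Fin k) ℂ :=
    Unitary.star_mem hH.eigenvectorUnitary.2
  have hH1 : Integrable (fun y : Fin k → ℂ => ∏ i, Real.exp (-(d i * Complex.normSq (y i)))) :=
    Integrable.fintype_prod (f := fun i (z : ℂ) => Real.exp (-(d i * Complex.normSq z)))
      (fun i => integrable_1d (hd i))
  have hH2 := (unitary_integrable_comp hVmem
    (fun y : Fin k → ℂ => ∏ i, Real.exp (-(d i * Complex.normSq (y i))))).2 hH1
  have hH3 := hH2.const_mul ((π ^ k * A.det.re)⁻¹)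
  exact hH3.congr (ae_of_all _ fun x => (cg_pointwise hA x).symm)

end Integral

end CGAux

/-- Generalized Regev lemma: if `X₁ ~ D_{Λ+c,√Σ₁}` (discrete Gaussian) and
`X₂ ~ f_{√Σ₂}` (continuous Gaussian) are independent, `Σ₀ = Σ₁+Σ₂`,
`Σ⁻¹ = Σ₁⁻¹+Σ₂⁻¹`, and the flatness factor satisfies `ε_Λ(√Σ) ≤ ε ≤ 1/2`,
then the density `g` of `X = X₁+X₂` satisfies `𝕍(g, f_{√Σ₀}) ≤ 4ε`. -/
theorem generalized_regev {k : ℕ}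
    (L : Submodule ℤ (Fin k → ℂ)) [DiscreteTopology L]
    (cv : Fin k → ℂ)
    (Sig1 Sig2 Sig0 Sig : Matrix (Fin k) (Fin k) ℂ)
    (h1 : Sig1.PosDef) (h2 : Sig2.PosDef) (hS : Sig.PosDef)
    (h0 : Sig0 = Sig1 + Sig2)
    (hSinv : Sig⁻¹ = Sig1⁻¹ + Sig2⁻¹)
    (Vol ε : ℝ) (hVol : 0 < Vol)
    -- flatness factor of `Λ` w.r.t. `√Σ` is at most `ε`
    (hflat : ∀ z : Fin k → ℂ,
      |Vol * (∑' l : L, complexGaussian Sig (z - (l : Fin k → ℂ))) - 1| ≤ ε)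
    (hε : ε ≤ 1 / 2)
    -- `g` is the density of `X = X₁ + X₂`
    (g : (Fin k → ℂ) → ℝ)
    (hg : ∀ x : Fin k → ℂ,
      g x = ∑' l : L,
        (complexGaussian Sig1 ((l : Fin k → ℂ) + cv) /
          (∑' l' : L, complexGaussian Sig1 ((l' : Fin k → ℂ) + cv))) *
          complexGaussian Sig2 (x - ((l : Fin k → ℂ) + cv))) :
    (∫ x : Fin k → ℂ, |g x - complexGaussian Sig0 x|) ≤ 4 * ε := by
  classical
  haveI hcL : Countable L := countable_of_Lindelof_of_discrete
  have hε0 : 0 ≤ ε := le_trans (abs_nonneg _) (hflat 0)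
  have h1e : (0:ℝ) < 1 - ε := by linarith
  have h0d : Sig0.PosDef := h0 ▸ h1.add h2
  -- bounds for the lattice Gaussian sums
  have hSle : ∀ z : Fin k → ℂ,
      (∑' l : L, complexGaussian Sig (z - (l : Fin k → ℂ))) ≤ (1 + ε) / Vol := by
    intro z
    have h := (abs_le.1 (hflat z)).2
    rw [le_div_iff₀ hVol]
    nlinarith
  have hSge : ∀ z : Fin k → ℂ,
      (1 - ε) / Vol ≤ ∑' l : L, complexGaussian Sig (z - (l : Fin k → ℂ)) := by
    intro z
    have h := (abs_le.1 (hflat z)).1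
    rw [div_le_iff₀ hVol]
    nlinarith
  have hSsum : ∀ z : Fin k → ℂ,
      Summable (fun l : L => complexGaussian Sig (z - (l : Fin k → ℂ))) := by
    intro z
    by_contra hns
    have h := hflat z
    rw [tsum_eq_zero_of_not_summable hns, mul_zero, zero_sub, abs_neg, abs_one] at h
    linarith
  set m : (Fin k → ℂ) → (Fin k → ℂ) := fun x => Sig.mulVec (Sig2⁻¹.mulVec x) with hm
  -- product identity, in shifted form
  have key : ∀ (l : L) (x : Fin k → ℂ),
      complexGaussian Sig1 ((l : Fin k → ℂ) + cv) *
        complexGaussian Sig2 (x - ((l : Fin k → ℂ) + cv)) =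
      complexGaussian Sig0 x * complexGaussian Sig ((m x - cv) - (l : Fin k → ℂ)) := by
    intro l x
    have h := CGAux.cg_prod h1 h2 hS hSinv x ((l : Fin k → ℂ) + cv)
    rw [h0, h]
    congr 1
    have hv : ((l : Fin k → ℂ) + cv) - Sig.mulVec (Sig2⁻¹.mulVec x)
        = -((m x - cv) - (l : Fin k → ℂ)) := by
      rw [hm]
      abel
    rw [hv, CGAux.cg_neg]
  -- integral representation of the discrete Gaussian weights
  have hf2 : ∀ y : Fin k → ℂ, ∫ x : Fin k → ℂ, complexGaussian Sig2 (x - y) = 1 := by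
    intro y
    rw [integral_sub_right_eq_self (complexGaussian Sig2) y]
    exact CGAux.cg_integral h2
  have hint : ∀ l : L, complexGaussian Sig1 ((l : Fin k → ℂ) + cv)
      = ∫ x : Fin k → ℂ,
          complexGaussian Sig0 x * complexGaussian Sig ((m x - cv) - (l : Fin k → ℂ)) := by
    intro l
    calc complexGaussian Sig1 ((l : Fin k → ℂ) + cv)
        = complexGaussian Sig1 ((l : Fin k → ℂ) + cv) *
            ∫ x : Fin k → ℂ, complexGaussian Sig2 (x - ((l : Fin k → ℂ) + cv)) := by
          rw [hf2, mul_one]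
      _ = ∫ x : Fin k → ℂ, complexGaussian Sig1 ((l : Fin k → ℂ) + cv) *
            complexGaussian Sig2 (x - ((l : Fin k → ℂ) + cv)) := (integral_const_mul _ _).symm
      _ = ∫ x : Fin k → ℂ,
            complexGaussian Sig0 x * complexGaussian Sig ((m x - cv) - (l : Fin k → ℂ)) :=
          integral_congr_ae (ae_of_all _ fun x => key l x)
  -- continuity and integrability of the integrands
  have hmcont : Continuous m := by
    rw [hm]
    have c1 : Continuous fun x : Fin k → ℂ => Sig2⁻¹.mulVec x :=
      (Matrix.mulVecLin Sig2⁻¹).continuous_of_finiteDimensional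
    have c2 : Continuous fun x : Fin k → ℂ => Sig.mulVec x :=
      (Matrix.mulVecLin Sig).continuous_of_finiteDimensional
    exact c2.comp c1
  have hFcont : ∀ l : L, Continuous (fun x : Fin k → ℂ =>
      complexGaussian Sig0 x * complexGaussian Sig ((m x - cv) - (l : Fin k → ℂ))) := by
    intro l
    exact (CGAux.cg_continuous Sig0).mul ((CGAux.cg_continuous Sig).comp
      (((hmcont.sub continuous_const).sub continuous_const)))
  have hFint : ∀ l : L, Integrable (fun x : Fin k → ℂ =>
      complexGaussian Sig0 x * complexGaussian Sig ((m x - cv) - (l : Fin k → ℂ))) := by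
    intro l
    refine Integrable.mono' ((CGAux.cg_integrable h0d).const_mul ((π ^ k * Sig.det.re)⁻¹))
      (hFcont l).aestronglyMeasurable (ae_of_all _ fun x => ?_)
    rw [Real.norm_eq_abs,
      abs_of_nonneg (mul_nonneg (CGAux.cg_pos h0d x).le (CGAux.cg_pos hS _).le)]
    calc complexGaussian Sig0 x * complexGaussian Sig ((m x - cv) - (l : Fin k → ℂ))
        ≤ complexGaussian Sig0 x * (π ^ k * Sig.det.re)⁻¹ :=
          mul_le_mul_of_nonneg_left (CGAux.cg_le hS _) (CGAux.cg_pos h0d x).le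
      _ = (π ^ k * Sig.det.re)⁻¹ * complexGaussian Sig0 x := mul_comm _ _
  -- ENNReal bookkeeping
  have ha0 : ∀ l : L, 0 ≤ complexGaussian Sig1 ((l : Fin k → ℂ) + cv) :=
    fun l => (CGAux.cg_pos h1 _).le
  have hofReal : ∀ l : L, ENNReal.ofReal (complexGaussian Sig1 ((l : Fin k → ℂ) + cv))
      = ∫⁻ x : Fin k → ℂ, ENNReal.ofReal
          (complexGaussian Sig0 x * complexGaussian Sig ((m x - cv) - (l : Fin k → ℂ))) := by
    intro l
    rw [hint l]
    exact MeasureTheory.ofReal_integral_eq_lintegral_ofReal (hFint l)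
      (ae_of_all _ fun x => mul_nonneg (CGAux.cg_pos h0d x).le (CGAux.cg_pos hS _).le)
  have hswap : ∑' l : L, ENNReal.ofReal (complexGaussian Sig1 ((l : Fin k → ℂ) + cv))
      = ∫⁻ x : Fin k → ℂ, ENNReal.ofReal (complexGaussian Sig0 x) *
          ENNReal.ofReal (∑' l : L, complexGaussian Sig ((m x - cv) - (l : Fin k → ℂ))) := by
    rw [tsum_congr hofReal, ← lintegral_tsum
      (fun l => ((hFcont l).measurable.ennreal_ofReal).aemeasurable)]
    refine lintegral_congr fun x => ?_
    calc ∑' l : L, ENNReal.ofReal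
          (complexGaussian Sig0 x * complexGaussian Sig ((m x - cv) - (l : Fin k → ℂ)))
        = ∑' l : L, ENNReal.ofReal (complexGaussian Sig0 x) *
            ENNReal.ofReal (complexGaussian Sig ((m x - cv) - (l : Fin k → ℂ))) := by
          simp_rw [ENNReal.ofReal_mul (CGAux.cg_pos h0d x).le]
      _ = ENNReal.ofReal (complexGaussian Sig0 x) *
            ∑' l : L, ENNReal.ofReal (complexGaussian Sig ((m x - cv) - (l : Fin k → ℂ))) :=
          ENNReal.tsum_mul_left
      _ = ENNReal.ofReal (complexGaussian Sig0 x) *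
            ENNReal.ofReal (∑' l : L, complexGaussian Sig ((m x - cv) - (l : Fin k → ℂ))) := by
          rw [← ENNReal.ofReal_tsum_of_nonneg (fun l => (CGAux.cg_pos hS _).le)
            (hSsum (m x - cv))]
  have hl0 : ∫⁻ x : Fin k → ℂ, ENNReal.ofReal (complexGaussian Sig0 x) = 1 := by
    rw [← MeasureTheory.ofReal_integral_eq_lintegral_ofReal (CGAux.cg_integrable h0d)
      (ae_of_all _ fun x => (CGAux.cg_pos h0d x).le), CGAux.cg_integral h0d,
      ENNReal.ofReal_one]
  have hup : ∑' l : L, ENNReal.ofReal (complexGaussian Sig1 ((l : Fin k → ℂ) + cv))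
      ≤ ENNReal.ofReal ((1 + ε) / Vol) := by
    rw [hswap]
    calc ∫⁻ x : Fin k → ℂ, ENNReal.ofReal (complexGaussian Sig0 x) *
          ENNReal.ofReal (∑' l : L, complexGaussian Sig ((m x - cv) - (l : Fin k → ℂ)))
        ≤ ∫⁻ x : Fin k → ℂ, ENNReal.ofReal (complexGaussian Sig0 x) *
            ENNReal.ofReal ((1 + ε) / Vol) :=
          lintegral_mono fun x => mul_le_mul_right (ENNReal.ofReal_le_ofReal (hSle _)) _
      _ = ENNReal.ofReal ((1 + ε) / Vol) := by
          rw [lintegral_mul_const' _ _ ENNReal.ofReal_ne_top, hl0, one_mul]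
  have hlo : ENNReal.ofReal ((1 - ε) / Vol)
      ≤ ∑' l : L, ENNReal.ofReal (complexGaussian Sig1 ((l : Fin k → ℂ) + cv)) := by
    rw [hswap]
    calc ENNReal.ofReal ((1 - ε) / Vol)
        = ∫⁻ x : Fin k → ℂ, ENNReal.ofReal (complexGaussian Sig0 x) *
            ENNReal.ofReal ((1 - ε) / Vol) := by
          rw [lintegral_mul_const' _ _ ENNReal.ofReal_ne_top, hl0, one_mul]
      _ ≤ ∫⁻ x : Fin k → ℂ, ENNReal.ofReal (complexGaussian Sig0 x) *
            ENNReal.ofReal (∑' l : L, complexGaussian Sig ((m x - cv) - (l : Fin k → ℂ))) :=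
          lintegral_mono fun x => mul_le_mul_right (ENNReal.ofReal_le_ofReal (hSge _)) _
  have hne : (∑' l : L, ENNReal.ofReal (complexGaussian Sig1 ((l : Fin k → ℂ) + cv))) ≠ ⊤ :=
    (lt_of_le_of_lt hup ENNReal.ofReal_lt_top).ne
  have hsa : Summable (fun l : L => complexGaussian Sig1 ((l : Fin k → ℂ) + cv)) := by
    have h := ENNReal.summable_toReal hne
    refine h.congr fun l => ?_
    exact ENNReal.toReal_ofReal (ha0 l)
  set Z : ℝ := ∑' l : L, complexGaussian Sig1 ((l : Fin k → ℂ) + cv) with hZ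
  have hZof : ENNReal.ofReal Z
      = ∑' l : L, ENNReal.ofReal (complexGaussian Sig1 ((l : Fin k → ℂ) + cv)) :=
    ENNReal.ofReal_tsum_of_nonneg ha0 hsa
  have hZub : Z ≤ (1 + ε) / Vol := by
    have h := hZof ▸ hup
    exact (ENNReal.ofReal_le_ofReal_iff (by positivity)).1 h
  have hZlb : (1 - ε) / Vol ≤ Z := by
    have h := hZof ▸ hlo
    exact (ENNReal.ofReal_le_ofReal_iff (tsum_nonneg ha0)).1 h
  have hZpos : 0 < Z := lt_of_lt_of_le (div_pos h1e hVol) hZlb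
  -- pointwise formula for g
  have hgx : ∀ x : Fin k → ℂ, g x = (complexGaussian Sig0 x / Z) *
      (∑' l : L, complexGaussian Sig ((m x - cv) - (l : Fin k → ℂ))) := by
    intro x
    rw [hg x]
    have hterm : ∀ l : L,
        (complexGaussian Sig1 ((l : Fin k → ℂ) + cv) / Z) *
          complexGaussian Sig2 (x - ((l : Fin k → ℂ) + cv))
        = (complexGaussian Sig0 x / Z) *
            complexGaussian Sig ((m x - cv) - (l : Fin k → ℂ)) := by
      intro l
      rw [div_mul_eq_mul_div, key l x, mul_div_right_comm]
    rw [tsum_congr hterm, tsum_mul_left]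
  -- pointwise bound
  have hpt : ∀ x : Fin k → ℂ,
      |g x - complexGaussian Sig0 x| ≤ 4 * ε * complexGaussian Sig0 x := by
    intro x
    have hb1 := hSle (m x - cv)
    have hb2 := hSge (m x - cv)
    set S : ℝ := ∑' l : L, complexGaussian Sig ((m x - cv) - (l : Fin k → ℂ)) with hs'
    have h0x : (0:ℝ) ≤ complexGaussian Sig0 x := (CGAux.cg_pos h0d x).le
    have hdiff : (1 + ε) / Vol - (1 - ε) / Vol = 2 * ε / Vol := by
      field_simp
      ring
    have h3 : |S - Z| ≤ 2 * ε / Vol := by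
      rw [abs_le]
      constructor <;> linarith
    rw [hgx x]
    have h4 : complexGaussian Sig0 x / Z * S - complexGaussian Sig0 x
        = (complexGaussian Sig0 x / Z) * (S - Z) := by
      field_simp
    rw [h4, abs_mul, abs_of_nonneg (div_nonneg h0x hZpos.le)]
    have h5 : complexGaussian Sig0 x / Z ≤ complexGaussian Sig0 x / ((1 - ε) / Vol) := by
      gcongr
    calc complexGaussian Sig0 x / Z * |S - Z|
        ≤ (complexGaussian Sig0 x / ((1 - ε) / Vol)) * (2 * ε / Vol) :=
          mul_le_mul h5 h3 (abs_nonneg _) (div_nonneg h0x (by positivity))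
      _ ≤ 4 * ε * complexGaussian Sig0 x := by
          have heq : (complexGaussian Sig0 x / ((1 - ε) / Vol)) * (2 * ε / Vol)
              = complexGaussian Sig0 x * (2 * ε / (1 - ε)) := by
            field_simp
          rw [heq]
          have h6 : 2 * ε / (1 - ε) ≤ 4 * ε := by
            rw [div_le_iff₀ h1e]
            nlinarith
          calc complexGaussian Sig0 x * (2 * ε / (1 - ε))
              ≤ complexGaussian Sig0 x * (4 * ε) := mul_le_mul_of_nonneg_left h6 h0x
            _ = 4 * ε * complexGaussian Sig0 x := by ring
  -- conclusion
  calc (∫ x : Fin k → ℂ, |g x - complexGaussian Sig0 x|)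
      ≤ ∫ x : Fin k → ℂ, 4 * ε * complexGaussian Sig0 x :=
        integral_mono_of_nonneg (ae_of_all _ fun x => abs_nonneg _)
          ((CGAux.cg_integrable h0d).const_mul _) (ae_of_all _ hpt)
    _ = 4 * ε := by rw [integral_const_mul, CGAux.cg_integral h0d, mul_one]
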